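/- Let q ∈ (1,∞), κ ∈ [0,1], and define A(ξ) := (κ + |ξ|)^{q−2} ξ and F(ξ) := (κ + |ξ|)^{(q−2)/2} ξ for ξ ∈ ℝ^{n×n}. Then uniformly in P, Q ∈ ℝ^{n×n}: (A(P) − A(Q)) : (P − Q) ∼ |F(P) − F(Q)|² ∼ (κ + |P| + |Q|)^{q−2} |P − Q|², with implicit constants depending only on q (and κ ≤ 1). -/

import Mathlib

/-- The tensor `A(ξ) = (κ + |ξ|)^{q−2} ξ` on `ℝ^{n×n}` (modeled as the Euclidean
space indexed by `Fin n × Fin n`, whose norm is the Frobenius norm and whose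
inner product is the Frobenius inner product `:`). -/
noncomputable def Atens (n : ℕ) (q κ : ℝ) (ξ : EuclideanSpace ℝ (Fin n × Fin n)) :
    EuclideanSpace ℝ (Fin n × Fin n) :=
  ((κ + ‖ξ‖) ^ (q - 2)) • ξ

/-- The tensor `F(ξ) = (κ + |ξ|)^{(q−2)/2} ξ`. -/
noncomputable def Ftens (n : ℕ) (q κ : ℝ) (ξ : EuclideanSpace ℝ (Fin n × Fin n)) :
    EuclideanSpace ℝ (Fin n × Fin n) :=
  ((κ + ‖ξ‖) ^ ((q - 2) / 2)) • ξ

open Real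

lemma rpow_cancel {c : ℝ} (hc : 0 < c) (β : ℝ) : c^(-β) * c^β = 1 := by
  rw [← rpow_add hc]; simp

lemma core_low {β κ x y : ℝ} (hβ : -1 < β) (hκ : 0 ≤ κ) (hy : 0 ≤ y) (hxy : y ≤ x) :
    min (1+β) ((2:ℝ)^(-β)) * ((κ+x+y)^β * (x-y)) ≤ (κ+x)^β * x - (κ+y)^β * y := by
  have hx : 0 ≤ x := hy.trans hxy
  have hb0 : 0 ≤ κ + y := by linarith
  have ha0 : 0 ≤ κ + x := by linarith
  have hs0 : 0 ≤ κ + x + y := by linarith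
  have hab : κ + y ≤ κ + x := by linarith
  have hs2a : κ + x + y ≤ 2*(κ+x) := by linarith
  rcases le_or_gt 0 β with h0 | h0
  · -- β ≥ 0
    have h1 : (κ+x+y)^β ≤ (2*(κ+x))^β := rpow_le_rpow hs0 hs2a h0
    rw [mul_rpow (by norm_num) ha0] at h1
    have h2 : (2:ℝ)^(-β) * ((κ+x+y)^β) ≤ (κ+x)^β := by
      have h3 := rpow_cancel (two_pos) β
      have h4 := mul_le_mul_of_nonneg_left h1 (le_of_lt (rpow_pos_of_pos two_pos (-β)))
      have h5 : (2:ℝ)^(-β)*((2:ℝ)^β*(κ+x)^β) = (κ+x)^β := by rw [← mul_assoc, h3, one_mul]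
      linarith
    have hba : (κ+y)^β ≤ (κ+x)^β := rpow_le_rpow hb0 hab h0
    have hmin : min (1+β) ((2:ℝ)^(-β)) ≤ (2:ℝ)^(-β) := min_le_right _ _
    nlinarith [mul_le_mul_of_nonneg_right h2 (sub_nonneg.2 hxy),
      mul_le_mul_of_nonneg_right hmin (mul_nonneg (rpow_nonneg hs0 β) (sub_nonneg.2 hxy)),
      mul_le_mul_of_nonneg_right hba hy]
  · -- β < 0
    have hmin : min (1+β) ((2:ℝ)^(-β)) ≤ 1+β := min_le_left _ _
    rcases eq_or_lt_of_le ha0 with ha | ha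
    · have hx0 : x = 0 := by linarith
      have hy0 : y = 0 := by linarith
      simp [hx0, hy0]
    have hsa : (κ+x+y)^β ≤ (κ+x)^β := rpow_le_rpow_of_nonpos ha (by linarith) h0.le
    have main : (1+β) * ((κ+x)^β*(x-y)) ≤ (κ+x)^β*x - (κ+y)^β*y := by
      rcases eq_or_lt_of_le hb0 with hb | hb
      · have hy0 : y = 0 := by linarith
        have hpos : 0 ≤ (κ+x)^β * x := mul_nonneg (rpow_nonneg ha0 _) hx
        simp only [hy0, mul_zero, sub_zero]
        nlinarith
      · set u := ((κ+x) - (κ+y))/(κ+y) with hu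
        have hu0 : 0 ≤ u := div_nonneg (by linarith) hb0
        have hbu : (κ+y) * (1+u) = κ+x := by rw [hu]; field_simp; ring
        have hbern : (1+u)^(-β) ≤ 1 + (-β)*u :=
          rpow_one_add_le_one_add_mul_self (by linarith) (by linarith) (by linarith)
        have h1u : (0:ℝ) < 1 + u := by linarith
        have hc := rpow_cancel h1u β
        have haeq : (κ+x)^β = (κ+y)^β * (1+u)^β := by
          rw [← hbu, mul_rpow hb0 (by linarith)]
        have hub : u * (κ+y) = x - y := by rw [hu]; field_simp; ring
        have h5 : (-β)*(u*y) ≤ (-β)*(u*(κ+y)) :=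
          mul_le_mul_of_nonneg_left (mul_le_mul_of_nonneg_left (by linarith : y ≤ κ+y) hu0)
            (by linarith : (0:ℝ) ≤ -β)
        have h6 : (1+u)^(-β) * y ≤ y - β*(x-y) := by
          have := mul_le_mul_of_nonneg_right hbern hy
          nlinarith
        have h7 : y ≤ (1+u)^β * (y - β*(x-y)) := by
          have h8 := mul_le_mul_of_nonneg_left h6 (rpow_nonneg (le_of_lt h1u) β)
          have hyy : (1+u)^β * ((1+u)^(-β)*y) = y := by
            rw [← mul_assoc, mul_comm ((1+u)^β), hc, one_mul]
          linarith
        have h9 : (κ+y)^β * y ≤ (κ+x)^β * (y - β*(x-y)) := by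
          have h10 := mul_le_mul_of_nonneg_left h7 (rpow_nonneg hb0 β)
          rw [haeq]; nlinarith
        nlinarith [h9]
    have hfin := mul_le_mul_of_nonneg_left (mul_le_mul_of_nonneg_right hsa (sub_nonneg.2 hxy))
      (by linarith : (0:ℝ) ≤ 1+β)
    nlinarith [mul_le_mul_of_nonneg_right hmin
      (mul_nonneg (rpow_nonneg hs0 β) (sub_nonneg.2 hxy))]

set_option maxHeartbeats 1000000 in
lemma core_up {β κ x y : ℝ} (hβ : -1 < β) (hκ : 0 ≤ κ) (hy : 0 ≤ y) (hxy : y ≤ x) :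
    (κ+x)^β * x - (κ+y)^β * y ≤ ((1+β) + (2:ℝ)^(-β)) * ((κ+x+y)^β * (x-y)) := by
  have hx : 0 ≤ x := hy.trans hxy
  have hb0 : 0 ≤ κ + y := by linarith
  have ha0 : 0 ≤ κ + x := by linarith
  have hs0 : 0 ≤ κ + x + y := by linarith
  have hab : κ + y ≤ κ + x := by linarith
  have h2β : (0:ℝ) < 2^(-β) := rpow_pos_of_pos two_pos _
  rcases eq_or_lt_of_le ha0 with ha | ha
  · have hx0 : x = 0 := by linarith
    have hy0 : y = 0 := by linarith
    simp [hx0, hy0]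
  have hs : (0:ℝ) < κ + x + y := by linarith
  rcases le_or_gt 0 β with h0 | h0
  · -- β ≥ 0
    have hsβ : (0:ℝ) ≤ (κ+x+y)^β := rpow_nonneg hs0 β
    have haS : (κ+x)^β ≤ (κ+x+y)^β := rpow_le_rpow ha0 (by linarith) h0
    have hbS : (κ+y)^β ≤ (κ+x+y)^β := rpow_le_rpow hb0 (by linarith) h0
    have cross : ((κ+x)^β - (κ+y)^β) * y ≤ β * ((κ+x+y)^β * (x-y)) := by
      rcases eq_or_lt_of_le hb0 with hb | hb
      · have hy0 : y = 0 := by linarith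
        have hpos : 0 ≤ β * ((κ+x+y)^β * (x-y)) :=
          mul_nonneg h0 (mul_nonneg hsβ (by linarith))
        rw [hy0]; rw [hy0] at hpos; simpa using hpos
      · rcases le_or_gt β 1 with h1 | h1
        · set u := ((κ+x) - (κ+y))/(κ+y) with hu
          have hu0 : 0 ≤ u := div_nonneg (by linarith) hb0
          have hbu : (κ+y) * (1+u) = κ+x := by rw [hu]; field_simp; ring
          have hub : u * (κ+y) = x - y := by rw [hu]; field_simp; ring
          have hbern : (1+u)^β ≤ 1 + β*u :=
            rpow_one_add_le_one_add_mul_self (by linarith) h0 h1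
          have haeq : (κ+x)^β = (κ+y)^β * (1+u)^β := by
            rw [← hbu, mul_rpow hb0 (by linarith)]
          have h3 : (κ+x)^β ≤ (κ+y)^β + β * ((κ+y)^β * u) := by
            have := mul_le_mul_of_nonneg_left hbern (rpow_nonneg hb0 β)
            rw [haeq]; nlinarith
          have h4 : β * ((κ+y)^β * u) * y ≤ β * ((κ+y)^β * u) * (κ+y) :=
            mul_le_mul_of_nonneg_left (by linarith : y ≤ κ+y)
              (mul_nonneg h0 (mul_nonneg (rpow_nonneg hb0 β) hu0))
          have h5 : (κ+y)^β * (u * (κ+y)) = (κ+y)^β * (x-y) := by rw [hub]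
          have h6 : β * ((κ+y)^β * (x-y)) ≤ β * ((κ+x+y)^β * (x-y)) :=
            mul_le_mul_of_nonneg_left
              (mul_le_mul_of_nonneg_right hbS (by linarith)) h0
          nlinarith [mul_le_mul_of_nonneg_right h3 hy]
        · -- β ≥ 1
          set v := ((κ+y) - (κ+x))/(κ+x) with hv
          have hv1 : -1 ≤ v := by rw [hv, le_div_iff₀ ha]; linarith
          have hv0 : v ≤ 0 := div_nonpos_of_nonpos_of_nonneg (by linarith) ha0
          have hav : (κ+x) * (1+v) = κ+y := by rw [hv]; field_simp; ring
          have hva : v * (κ+x) = y - x := by rw [hv]; field_simp; ring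
          have hbern : 1 + β*v ≤ (1+v)^β := one_add_mul_self_le_rpow_one_add hv1 h1.le
          have hbeq : (κ+y)^β = (κ+x)^β * (1+v)^β := by
            rw [← hav, mul_rpow ha0 (by linarith)]
          have h3 : (κ+x)^β + β*((κ+x)^β * v) ≤ (κ+y)^β := by
            have := mul_le_mul_of_nonneg_left hbern (rpow_nonneg ha0 β)
            rw [hbeq]; nlinarith
          have hnn : (0:ℝ) ≤ -(β*((κ+x)^β * v)) := by
            have h := mul_nonneg (mul_nonneg h0 (rpow_nonneg ha0 β)) (neg_nonneg.2 hv0)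
            nlinarith [h]
          have h4 : (-(β*((κ+x)^β * v))) * y ≤ (-(β*((κ+x)^β * v))) * (κ+x) :=
            mul_le_mul_of_nonneg_left (by linarith : y ≤ κ+x) hnn
          have h5 : β * ((κ+x)^β * (v * (κ+x))) = β * ((κ+x)^β * (y-x)) := by rw [hva]
          have h6 : β * ((κ+x)^β * (x-y)) ≤ β * ((κ+x+y)^β * (x-y)) :=
            mul_le_mul_of_nonneg_left
              (mul_le_mul_of_nonneg_right haS (by linarith)) h0
          have c1 := mul_le_mul_of_nonneg_right
            (by linarith : (κ+x)^β - (κ+y)^β ≤ -(β*((κ+x)^β * v))) hy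
          linarith [c1, h4, h5, h6]
    linarith [mul_le_mul_of_nonneg_right haS (sub_nonneg.2 hxy), cross,
      mul_nonneg (le_of_lt h2β) (mul_nonneg hsβ (sub_nonneg.2 hxy))]
  · -- β < 0
    have hsβ : (0:ℝ) ≤ (κ+x+y)^β := rpow_nonneg hs0 β
    rcases eq_or_lt_of_le hb0 with hb | hb
    · have hy0 : y = 0 := by linarith
      have hκ0 : κ = 0 := by linarith
      have h1 : (1:ℝ) ≤ 2^(-β) := by
        calc (1:ℝ) = 2^(0:ℝ) := by norm_num
        _ ≤ 2^(-β) := rpow_le_rpow_of_exponent_le one_le_two (by linarith)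
      have hpos : 0 ≤ (κ+x)^β * x := mul_nonneg (rpow_nonneg ha0 β) hx
      rw [hy0] at *
      have hzero : (κ+0)^β * 0 = 0 := by ring
      have heq : (κ+x+0)^β * (x-0) = (κ+x)^β * x := by norm_num
      rw [hzero, heq, sub_zero]
      nlinarith
    · have hba : (κ+x)^β ≤ (κ+y)^β := rpow_le_rpow_of_nonpos hb hab h0.le
      have h7 : (κ+x+y)/2 ≤ κ+x := by linarith
      have h7' : (0:ℝ) < (κ+x+y)/2 := by linarith
      have h8 : (κ+x)^β ≤ ((κ+x+y)/2)^β := rpow_le_rpow_of_nonpos h7' h7 h0.le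
      have h9 : ((κ+x+y)/2)^β = (κ+x+y)^β * 2^(-β) := by
        rw [div_rpow hs0 (by norm_num), rpow_neg (by norm_num), div_eq_mul_inv]
      rw [h9] at h8
      linarith [mul_le_mul_of_nonneg_right h8 (sub_nonneg.2 hxy),
        mul_le_mul_of_nonneg_right hba hy,
        mul_nonneg (by linarith : (0:ℝ) ≤ 1+β) (mul_nonneg hsβ (sub_nonneg.2 hxy))]

section helpers
variable {β κ x z : ℝ}

lemma rpow_s_le_a (hβ : -1 < β) (hκ : 0 ≤ κ) (hz : 0 ≤ z) (hzx : z ≤ x) :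
    min (1+β) ((2:ℝ)^(-β)) * (κ+x+z)^β ≤ (κ+x)^β := by
  have hx : 0 ≤ x := hz.trans hzx
  have ha0 : 0 ≤ κ + x := by linarith
  have hs0 : 0 ≤ κ + x + z := by linarith
  have hs2a : κ + x + z ≤ 2*(κ+x) := by linarith
  rcases le_or_gt 0 β with h0 | h0
  · have h1 : (κ+x+z)^β ≤ (2*(κ+x))^β := rpow_le_rpow hs0 hs2a h0
    rw [mul_rpow (by norm_num) ha0] at h1
    have h3 := rpow_cancel (two_pos) β
    have h4 := mul_le_mul_of_nonneg_left h1 (le_of_lt (rpow_pos_of_pos two_pos (-β)))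
    have h5 : (2:ℝ)^(-β)*((2:ℝ)^β*(κ+x)^β) = (κ+x)^β := by rw [← mul_assoc, h3, one_mul]
    have hmin : min (1+β) ((2:ℝ)^(-β)) ≤ (2:ℝ)^(-β) := min_le_right _ _
    have hsβ : (0:ℝ) ≤ (κ+x+z)^β := rpow_nonneg hs0 β
    nlinarith [mul_le_mul_of_nonneg_right hmin hsβ]
  · rcases eq_or_lt_of_le ha0 with ha | ha
    · have hx0 : x = 0 := by linarith
      have hz0 : z = 0 := by linarith
      have hκ0 : κ = 0 := by linarith
      rw [hx0, hz0, hκ0]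
      norm_num [zero_rpow (by linarith : β ≠ 0)]
    · have hsa : (κ+x+z)^β ≤ (κ+x)^β := rpow_le_rpow_of_nonpos ha (by linarith) h0.le
      have hmin : min (1+β) ((2:ℝ)^(-β)) ≤ 1 := le_trans (min_le_left _ _) (by linarith)
      have hmin0 : 0 ≤ min (1+β) ((2:ℝ)^(-β)) :=
        le_min (by linarith) (le_of_lt (rpow_pos_of_pos two_pos _))
      have hsβ : (0:ℝ) ≤ (κ+x+z)^β := rpow_nonneg hs0 β
      nlinarith [mul_le_mul_of_nonneg_right hmin hsβ]

lemma rpow_a_le_s (hβ : -1 < β) (hκ : 0 ≤ κ) (hz : 0 ≤ z) (hzx : z ≤ x) :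
    (κ+x)^β ≤ (1+(2:ℝ)^(-β)) * (κ+x+z)^β := by
  have hx : 0 ≤ x := hz.trans hzx
  have ha0 : 0 ≤ κ + x := by linarith
  have hs0 : 0 ≤ κ + x + z := by linarith
  have hsβ : (0:ℝ) ≤ (κ+x+z)^β := rpow_nonneg hs0 β
  have h2β : (0:ℝ) < 2^(-β) := rpow_pos_of_pos two_pos _
  rcases le_or_gt 0 β with h0 | h0
  · have h1 : (κ+x)^β ≤ (κ+x+z)^β := rpow_le_rpow ha0 (by linarith) h0
    nlinarith
  · rcases eq_or_lt_of_le ha0 with ha | ha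
    · have hx0 : x = 0 := by linarith
      have hz0 : z = 0 := by linarith
      have hκ0 : κ = 0 := by linarith
      rw [hx0, hz0, hκ0]
      norm_num [zero_rpow (by linarith : β ≠ 0)]
    · have hs : (0:ℝ) < κ + x + z := by linarith
      have h7 : (κ+x+z)/2 ≤ κ+x := by linarith
      have h8 : (κ+x)^β ≤ ((κ+x+z)/2)^β := rpow_le_rpow_of_nonpos (by linarith) h7 h0.le
      have h9 : ((κ+x+z)/2)^β = (κ+x+z)^β * 2^(-β) := by
        rw [div_rpow hs0 (by norm_num), rpow_neg (by norm_num), div_eq_mul_inv]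
      nlinarith

lemma mixed_b_bound (hβ : -1 < β) (hκ : 0 ≤ κ) (hz : 0 ≤ z) (hzx : z ≤ x) :
    (κ+z)^β * (z*x) ≤ (1+(3:ℝ)^(-β)) * ((κ+x+z)^β * x^2) := by
  have hx : 0 ≤ x := hz.trans hzx
  have hb0 : 0 ≤ κ + z := by linarith
  have hs0 : 0 ≤ κ + x + z := by linarith
  have hsβ : (0:ℝ) ≤ (κ+x+z)^β := rpow_nonneg hs0 β
  have h3β : (0:ℝ) < 3^(-β) := rpow_pos_of_pos three_pos _
  rcases le_or_gt 0 β with h0 | h0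
  · have h1 : (κ+z)^β ≤ (κ+x+z)^β := rpow_le_rpow hb0 (by linarith) h0
    have h2 : z*x ≤ x^2 := by nlinarith
    linarith [mul_le_mul_of_nonneg_right h1 (mul_nonneg hz hx),
      mul_le_mul_of_nonneg_left h2 hsβ,
      mul_nonneg (le_of_lt h3β) (mul_nonneg hsβ (sq_nonneg x))]
  · rcases eq_or_lt_of_le hz with hz' | hz'
    · subst hz'
      simp only [zero_mul, mul_zero]
      positivity
    · rcases le_or_gt κ x with hcase | hcase
      · -- κ ≤ x : use b ≥ z
        have hxpos : 0 < x := lt_of_lt_of_le hz' hzx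
        have hb1 : (κ+z)^β ≤ z^β := rpow_le_rpow_of_nonpos hz' (by linarith) h0.le
        have hz1 : z^(β+1) ≤ x^(β+1) := rpow_le_rpow (le_of_lt hz') hzx (by linarith)
        have hze : z^(β+1) = z^β * z := by
          rw [rpow_add_one (ne_of_gt hz')]
        have hxe : x^(β+1) = x^β * x := by
          rw [rpow_add_one (ne_of_gt hxpos)]
        have hs3 : κ + x + z ≤ 3*x := by linarith
        have h9 : ((κ+x+z)/3)^β = (κ+x+z)^β * 3^(-β) := by
          rw [div_rpow hs0 (by norm_num), rpow_neg (by norm_num), div_eq_mul_inv]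
        have h8 : x^β ≤ ((κ+x+z)/3)^β := by
          rcases eq_or_lt_of_le hs0 with hs | hs
          · exfalso; nlinarith
          · exact rpow_le_rpow_of_nonpos (by linarith) (by linarith) h0.le
      -- (κ+z)^β * (z*x) ≤ z^β*z*x ≤ x^β*x*x = x^β x² ≤ 3^{-β} s^β x²
        rw [h9] at h8
        have s1 : (κ+z)^β * (z*x) ≤ z^β*z*x := by
          nlinarith [mul_le_mul_of_nonneg_right hb1 (mul_nonneg hz hx)]
        have s2 : z^β*z*x ≤ x^β*x*x := by
          have := mul_le_mul_of_nonneg_right hz1 hx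
          rw [hze, hxe] at this; nlinarith
        have s3 : x^β*x*x ≤ (κ+x+z)^β * 3^(-β) * x^2 := by
          nlinarith [mul_le_mul_of_nonneg_right h8 (sq_nonneg x)]
        nlinarith [mul_nonneg hsβ (sq_nonneg x)]
      · -- x < κ : use b ≥ κ
        have hκpos : 0 < κ := lt_of_le_of_lt hx hcase
        have hb1 : (κ+z)^β ≤ κ^β := rpow_le_rpow_of_nonpos hκpos (by linarith) h0.le
        have hs3 : κ + x + z ≤ 3*κ := by linarith
        have h9 : ((κ+x+z)/3)^β = (κ+x+z)^β * 3^(-β) := by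
          rw [div_rpow hs0 (by norm_num), rpow_neg (by norm_num), div_eq_mul_inv]
        have h8 : κ^β ≤ ((κ+x+z)/3)^β :=
          rpow_le_rpow_of_nonpos (by linarith) (by linarith) h0.le
        rw [h9] at h8
        have h2 : z*x ≤ x^2 := by nlinarith
        have s1 : (κ+z)^β * (z*x) ≤ κ^β * (z*x) :=
          mul_le_mul_of_nonneg_right hb1 (mul_nonneg hz hx)
        have s2 : κ^β * (z*x) ≤ κ^β * x^2 :=
          mul_le_mul_of_nonneg_left h2 (rpow_nonneg (le_of_lt hκpos) β)
        have s3 : κ^β * x^2 ≤ (κ+x+z)^β * 3^(-β) * x^2 :=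
          mul_le_mul_of_nonneg_right h8 (sq_nonneg x)
        nlinarith [mul_nonneg hsβ (sq_nonneg x)]

end helpers

lemma half_sq {t β : ℝ} (ht : 0 ≤ t) : (t^(β/2))^2 = t^β := by
  rw [← rpow_natCast (t^(β/2)) 2, ← rpow_mul ht]
  norm_num


set_option maxHeartbeats 1000000 in
lemma auxI {β κ : ℝ} (hβ : -1 < β) (hκ : 0 ≤ κ) (x y : ℝ) (hx : 0 ≤ x) (h1 : -x ≤ y)
    (h2 : y ≤ x) :
    min (1+β) ((2:ℝ)^(-β))/4 * ((κ+|x|+|y|)^β*(x-y)^2)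
        ≤ ((κ+|x|)^β*x - (κ+|y|)^β*y)*(x-y) ∧
    ((κ+|x|)^β*x - (κ+|y|)^β*y)*(x-y)
        ≤ (5+β+3*(2:ℝ)^(-β)+2*(3:ℝ)^(-β)) * ((κ+|x|+|y|)^β*(x-y)^2) := by
  have h2β : (0:ℝ) < 2^(-β) := rpow_pos_of_pos two_pos _
  have h3β : (0:ℝ) < 3^(-β) := rpow_pos_of_pos three_pos _
  have hm : (0:ℝ) ≤ min (1+β) ((2:ℝ)^(-β)) := le_min (by linarith) h2β.le
  rw [abs_of_nonneg hx]
  rcases le_or_gt 0 y with hy | hy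
  · -- same sign
    rw [abs_of_nonneg hy]
    have hxy0 : (0:ℝ) ≤ x - y := by linarith
    have hsβ : (0:ℝ) ≤ (κ+x+y)^β := rpow_nonneg (by linarith) β
    have hV : (0:ℝ) ≤ (κ+x+y)^β*(x-y)^2 := mul_nonneg hsβ (sq_nonneg _)
    have lo := mul_le_mul_of_nonneg_right (core_low hβ hκ hy h2) hxy0
    have up := mul_le_mul_of_nonneg_right (core_up hβ hκ hy h2) hxy0
    constructor
    · nlinarith [lo, mul_nonneg hm hV]
    · nlinarith [up, hV, mul_nonneg h2β.le hV, mul_nonneg h3β.le hV,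
        mul_nonneg (by linarith : (0:ℝ) ≤ 1+β) hV]
  · -- mixed sign
    obtain ⟨z, rfl⟩ : ∃ z, y = -z := ⟨-y, (neg_neg y).symm⟩
    have hz : 0 ≤ z := by linarith
    have hzx : z ≤ x := by linarith
    rw [abs_neg, abs_of_nonneg hz]
    have hsβ : (0:ℝ) ≤ (κ+x+z)^β := rpow_nonneg (by linarith) β
    have haβ : (0:ℝ) ≤ (κ+x)^β := rpow_nonneg (by linarith) β
    have hbβ : (0:ℝ) ≤ (κ+z)^β := rpow_nonneg (by linarith) β
    have hV : (0:ℝ) ≤ (κ+x+z)^β*(x-(-z))^2 := mul_nonneg hsβ (sq_nonneg _)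
    have t1 : (0:ℝ) ≤ (κ+x)^β*(x*z) := mul_nonneg haβ (mul_nonneg hx hz)
    have t2 : (0:ℝ) ≤ (κ+z)^β*(z*x) := mul_nonneg hbβ (mul_nonneg hz hx)
    have t3 : (0:ℝ) ≤ (κ+z)^β*z^2 := mul_nonneg hbβ (sq_nonneg _)
    constructor
    · have A1 := mul_le_mul_of_nonneg_right (rpow_s_le_a hβ hκ hz hzx) (sq_nonneg x)
      have hsq : (x-(-z))^2 ≤ 4*x^2 := by nlinarith
      have c2 := mul_le_mul_of_nonneg_left hsq (mul_nonneg hm hsβ)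
      nlinarith [A1, c2, t1, t2, t3, mul_nonneg haβ (sq_nonneg x)]
    · have u1 := mul_le_mul_of_nonneg_right (rpow_a_le_s hβ hκ hz hzx) (sq_nonneg x)
      have u2 := mixed_b_bound hβ hκ hz hzx
      have c3 : (κ+x)^β*(x*z) ≤ (κ+x)^β*x^2 := by
        apply mul_le_mul_of_nonneg_left _ haβ; nlinarith
      have c4 : (κ+z)^β*z^2 ≤ (κ+z)^β*(z*x) := by
        apply mul_le_mul_of_nonneg_left _ hbβ; nlinarith
      have hsq2 : x^2 ≤ (x-(-z))^2 := by nlinarith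
      have c5 := mul_le_mul_of_nonneg_left hsq2 hsβ
      have c6 := mul_le_mul_of_nonneg_left hsq2 (mul_nonneg h2β.le hsβ)
      have c7 := mul_le_mul_of_nonneg_left hsq2 (mul_nonneg h3β.le hsβ)
      nlinarith [u1, u2, c3, c4, c5, c6, c7,
        mul_nonneg (by linarith : (0:ℝ) ≤ 1+β) hV, mul_nonneg h2β.le hV]

set_option maxHeartbeats 1000000 in
lemma scalarI {β κ : ℝ} (hβ : -1 < β) (hκ : 0 ≤ κ) (x y : ℝ) :
    min (1+β) ((2:ℝ)^(-β))/4 * ((κ+|x|+|y|)^β*(x-y)^2)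
        ≤ ((κ+|x|)^β*x - (κ+|y|)^β*y)*(x-y) ∧
    ((κ+|x|)^β*x - (κ+|y|)^β*y)*(x-y)
        ≤ (5+β+3*(2:ℝ)^(-β)+2*(3:ℝ)^(-β)) * ((κ+|x|+|y|)^β*(x-y)^2) := by
  have e : κ+|y|+|x| = κ+|x|+|y| := by ring
  rcases le_total (|y|) (|x|) with h | h
  · rcases le_total 0 x with hx | hx
    · obtain ⟨u1, u2⟩ := abs_le.mp (h.trans_eq (abs_of_nonneg hx))
      exact auxI hβ hκ x y hx u1 u2
    · obtain ⟨u1, u2⟩ := abs_le.mp (h.trans_eq (abs_of_nonpos hx))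
      have := auxI hβ hκ (-x) (-y) (by linarith) (by linarith) (by linarith)
      simp only [abs_neg] at this
      constructor
      · nlinarith [this.1]
      · nlinarith [this.2]
  · rcases le_total 0 y with hy | hy
    · obtain ⟨u1, u2⟩ := abs_le.mp (h.trans_eq (abs_of_nonneg hy))
      have := auxI hβ hκ y x hy u1 u2
      rw [e] at this
      constructor
      · nlinarith [this.1]
      · nlinarith [this.2]
    · obtain ⟨u1, u2⟩ := abs_le.mp (h.trans_eq (abs_of_nonpos hy))
      have := auxI hβ hκ (-y) (-x) (by linarith) (by linarith) (by linarith)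
      simp only [abs_neg] at this
      rw [e] at this
      constructor
      · nlinarith [this.1]
      · nlinarith [this.2]

noncomputable def cGc (β : ℝ) : ℝ :=
  min ((min (1+β/2) ((2:ℝ)^(-(β/2))))^2) (min (1+β) ((2:ℝ)^(-β))/4)

noncomputable def CGc (β : ℝ) : ℝ :=
  ((1+β/2)+(2:ℝ)^(-(β/2)))^2 + (5+β+3*(2:ℝ)^(-β)+2*(3:ℝ)^(-β))


set_option maxHeartbeats 1000000 in
lemma auxG {β κ : ℝ} (hβ : -1 < β) (hκ : 0 ≤ κ) (x y : ℝ) (hx : 0 ≤ x) (h1 : -x ≤ y)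
    (h2 : y ≤ x) :
    cGc β * ((κ+|x|+|y|)^β*(x-y)^2)
        ≤ ((κ+|x|)^(β/2)*x - (κ+|y|)^(β/2)*y)^2 ∧
    ((κ+|x|)^(β/2)*x - (κ+|y|)^(β/2)*y)^2
        ≤ CGc β * ((κ+|x|+|y|)^β*(x-y)^2) := by
  have h2β : (0:ℝ) < 2^(-β) := rpow_pos_of_pos two_pos _
  have h3β : (0:ℝ) < 3^(-β) := rpow_pos_of_pos three_pos _
  have h2β2 : (0:ℝ) < 2^(-(β/2)) := rpow_pos_of_pos two_pos _
  have hβ2 : (-1:ℝ) < β/2 := by linarith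
  have hm : (0:ℝ) ≤ min (1+β) ((2:ℝ)^(-β)) := le_min (by linarith) h2β.le
  have hm2 : (0:ℝ) ≤ min (1+β/2) ((2:ℝ)^(-(β/2))) := le_min (by linarith) h2β2.le
  rw [abs_of_nonneg hx]
  rcases le_or_gt 0 y with hy | hy
  · -- same sign
    rw [abs_of_nonneg hy]
    have hs0 : (0:ℝ) ≤ κ+x+y := by linarith
    have hxy0 : (0:ℝ) ≤ x - y := by linarith
    have hsβ : (0:ℝ) ≤ (κ+x+y)^β := rpow_nonneg hs0 β
    have hV : (0:ℝ) ≤ (κ+x+y)^β*(x-y)^2 := mul_nonneg hsβ (sq_nonneg _)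
    have lo := core_low (β := β/2) hβ2 hκ hy h2
    have up := core_up (β := β/2) hβ2 hκ hy h2
    have hnn : (0:ℝ) ≤ min (1+β/2) ((2:ℝ)^(-(β/2))) * ((κ+x+y)^(β/2) * (x-y)) :=
      mul_nonneg hm2 (mul_nonneg (rpow_nonneg hs0 _) hxy0)
    have hd : (0:ℝ) ≤ (κ+x)^(β/2)*x - (κ+y)^(β/2)*y := le_trans hnn lo
    have L := pow_le_pow_left₀ hnn lo 2
    have U := pow_le_pow_left₀ hd up 2
    rw [mul_pow, mul_pow, half_sq hs0] at L U
    constructor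
    · have hc := mul_le_mul_of_nonneg_right
        (min_le_left ((min (1+β/2) ((2:ℝ)^(-(β/2))))^2) (min (1+β) ((2:ℝ)^(-β))/4)) hV
      rw [cGc]; nlinarith [L, hc]
    · rw [CGc]
      nlinarith [U, hV, mul_nonneg h2β.le hV, mul_nonneg h3β.le hV,
        mul_nonneg (by linarith : (0:ℝ) ≤ 1+β) hV]
  · -- mixed sign
    obtain ⟨z, rfl⟩ : ∃ z, y = -z := ⟨-y, (neg_neg y).symm⟩
    have hz : 0 ≤ z := by linarith
    have hzx : z ≤ x := by linarith
    rw [abs_neg, abs_of_nonneg hz]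
    have hs0 : (0:ℝ) ≤ κ+x+z := by linarith
    have ha0 : (0:ℝ) ≤ κ+x := by linarith
    have hb0 : (0:ℝ) ≤ κ+z := by linarith
    have hsβ : (0:ℝ) ≤ (κ+x+z)^β := rpow_nonneg hs0 β
    have haβ : (0:ℝ) ≤ (κ+x)^β := rpow_nonneg ha0 β
    have hbβ : (0:ℝ) ≤ (κ+z)^β := rpow_nonneg hb0 β
    have ha2 : ((κ+x)^(β/2))^2 = (κ+x)^β := half_sq ha0
    have hb2 : ((κ+z)^(β/2))^2 = (κ+z)^β := half_sq hb0
    have hV : (0:ℝ) ≤ (κ+x+z)^β*(x-(-z))^2 := mul_nonneg hsβ (sq_nonneg _)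
    have hD : ((κ+x)^(β/2)*x - (κ+z)^(β/2)*(-z))^2
        = (κ+x)^β*x^2 + 2*((κ+x)^(β/2)*(κ+z)^(β/2))*(x*z) + (κ+z)^β*z^2 := by
      rw [← ha2, ← hb2]; ring
    have cross : (0:ℝ) ≤ 2*((κ+x)^(β/2)*(κ+z)^(β/2))*(x*z) := by
      have := mul_nonneg (mul_nonneg (rpow_nonneg ha0 (β/2)) (rpow_nonneg hb0 (β/2)))
        (mul_nonneg hx hz)
      linarith
    have t3 : (0:ℝ) ≤ (κ+z)^β*z^2 := mul_nonneg hbβ (sq_nonneg _)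
    rw [hD]
    constructor
    · have A1 := mul_le_mul_of_nonneg_right (rpow_s_le_a hβ hκ hz hzx) (sq_nonneg x)
      have hsq : (x-(-z))^2 ≤ 4*x^2 := by nlinarith
      have c2 := mul_le_mul_of_nonneg_left hsq (mul_nonneg hm hsβ)
      have hc := mul_le_mul_of_nonneg_right
        (min_le_right ((min (1+β/2) ((2:ℝ)^(-(β/2))))^2) (min (1+β) ((2:ℝ)^(-β))/4)) hV
      rw [cGc]; nlinarith [A1, c2, hc]
    · have u1 := mul_le_mul_of_nonneg_right (rpow_a_le_s hβ hκ hz hzx) (sq_nonneg x)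
      have u2 := mixed_b_bound hβ hκ hz hzx
      have amgm : 2*((κ+x)^(β/2)*(κ+z)^(β/2))*(x*z) ≤ (κ+x)^β*x^2 + (κ+z)^β*z^2 := by
        nlinarith [sq_nonneg ((κ+x)^(β/2)*x - (κ+z)^(β/2)*z), ha2, hb2]
      have c4 : (κ+z)^β*z^2 ≤ (κ+z)^β*(z*x) := by
        apply mul_le_mul_of_nonneg_left _ hbβ; nlinarith
      have hsq2 : x^2 ≤ (x-(-z))^2 := by nlinarith
      have c5 := mul_le_mul_of_nonneg_left hsq2 hsβ
      have c6 := mul_le_mul_of_nonneg_left hsq2 (mul_nonneg h2β.le hsβ)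
      have c7 := mul_le_mul_of_nonneg_left hsq2 (mul_nonneg h3β.le hsβ)
      rw [CGc]
      nlinarith [u1, u2, amgm, c4, c5, c6, c7,
        mul_nonneg (by linarith : (0:ℝ) ≤ 1+β) hV,
        mul_nonneg (sq_nonneg ((1+β/2)+(2:ℝ)^(-(β/2)))) hV]

set_option maxHeartbeats 1000000 in
lemma scalarG {β κ : ℝ} (hβ : -1 < β) (hκ : 0 ≤ κ) (x y : ℝ) :
    cGc β * ((κ+|x|+|y|)^β*(x-y)^2)
        ≤ ((κ+|x|)^(β/2)*x - (κ+|y|)^(β/2)*y)^2 ∧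
    ((κ+|x|)^(β/2)*x - (κ+|y|)^(β/2)*y)^2
        ≤ CGc β * ((κ+|x|+|y|)^β*(x-y)^2) := by
  have e : κ+|y|+|x| = κ+|x|+|y| := by ring
  rcases le_total (|y|) (|x|) with h | h
  · rcases le_total 0 x with hx | hx
    · obtain ⟨u1, u2⟩ := abs_le.mp (h.trans_eq (abs_of_nonneg hx))
      exact auxG hβ hκ x y hx u1 u2
    · obtain ⟨u1, u2⟩ := abs_le.mp (h.trans_eq (abs_of_nonpos hx))
      have := auxG hβ hκ (-x) (-y) (by linarith) (by linarith) (by linarith)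
      simp only [abs_neg] at this
      constructor
      · nlinarith [this.1]
      · nlinarith [this.2]
  · rcases le_total 0 y with hy | hy
    · obtain ⟨u1, u2⟩ := abs_le.mp (h.trans_eq (abs_of_nonneg hy))
      have := auxG hβ hκ y x hy u1 u2
      rw [e] at this
      constructor
      · nlinarith [this.1]
      · nlinarith [this.2]
    · obtain ⟨u1, u2⟩ := abs_le.mp (h.trans_eq (abs_of_nonpos hy))
      have := auxG hβ hκ (-y) (-x) (by linarith) (by linarith) (by linarith)
      simp only [abs_neg] at this
      rw [e] at this
      constructor
      · nlinarith [this.1]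
      · nlinarith [this.2]

set_option maxHeartbeats 2000000 in
/-- the "hammer" lemma for the model tensors. For `q ∈ (1,∞)`
and `κ ∈ [0,1]`, uniformly in `P, Q ∈ ℝ^{n×n}`:
`(A(P) − A(Q)) : (P − Q) ∼ |F(P) − F(Q)|² ∼ (κ + |P| + |Q|)^{q−2} |P − Q|²`,
with constants depending only on `q`. -/
theorem statement11 (n : ℕ) (q κ : ℝ) (hq : 1 < q) (hκ : κ ∈ Set.Icc (0:ℝ) 1) :
    ∃ c₁ > 0, ∃ c₂ > 0, ∀ P Q : EuclideanSpace ℝ (Fin n × Fin n),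
      c₁ * ‖Ftens n q κ P - Ftens n q κ Q‖ ^ 2 ≤
        (inner ℝ (Atens n q κ P - Atens n q κ Q) (P - Q) : ℝ) ∧
      (inner ℝ (Atens n q κ P - Atens n q κ Q) (P - Q) : ℝ) ≤
        c₂ * ‖Ftens n q κ P - Ftens n q κ Q‖ ^ 2 ∧
      c₁ * ((κ + ‖P‖ + ‖Q‖) ^ (q - 2) * ‖P - Q‖ ^ 2) ≤
        (inner ℝ (Atens n q κ P - Atens n q κ Q) (P - Q) : ℝ) ∧
      (inner ℝ (Atens n q κ P - Atens n q κ Q) (P - Q) : ℝ) ≤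
        c₂ * ((κ + ‖P‖ + ‖Q‖) ^ (q - 2) * ‖P - Q‖ ^ 2) := by
  obtain ⟨hκ0, hκ1⟩ := hκ
  have hβ : (-1:ℝ) < q - 2 := by linarith
  have h2β : (0:ℝ) < 2^(-(q-2)) := rpow_pos_of_pos two_pos _
  have h3β : (0:ℝ) < 3^(-(q-2)) := rpow_pos_of_pos three_pos _
  have h2β2 : (0:ℝ) < 2^(-((q-2)/2)) := rpow_pos_of_pos two_pos _
  set cI : ℝ := min (1+(q-2)) ((2:ℝ)^(-(q-2)))/4 with hcI
  set CI : ℝ := 5+(q-2)+3*(2:ℝ)^(-(q-2))+2*(3:ℝ)^(-(q-2)) with hCI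
  have hcI0 : 0 < cI := by
    rw [hcI]; have : (0:ℝ) < min (1+(q-2)) ((2:ℝ)^(-(q-2))) := lt_min (by linarith) h2β
    linarith
  have hCI0 : 0 < CI := by rw [hCI]; linarith
  have hcG0 : 0 < cGc (q-2) := by
    rw [cGc]
    have hpos : (0:ℝ) < min (1+(q-2)/2) ((2:ℝ)^(-((q-2)/2))) := lt_min (by linarith) h2β2
    have : (0:ℝ) < min (1+(q-2)) ((2:ℝ)^(-(q-2))) := lt_min (by linarith) h2β
    exact lt_min (by positivity) (by linarith)
  have hCG0 : 0 < CGc (q-2) := by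
    rw [CGc]; nlinarith [sq_nonneg ((1+(q-2)/2)+(2:ℝ)^(-((q-2)/2)))]
  refine ⟨min cI (cI/CGc (q-2)), lt_min hcI0 (div_pos hcI0 hCG0),
    max CI (CI/cGc (q-2)), lt_of_lt_of_le hCI0 (le_max_left _ _), fun P Q => ?_⟩
  set p := ‖P‖ with hp
  set r := ‖Q‖ with hr
  set t : ℝ := inner ℝ P Q with ht
  have hp0 : 0 ≤ p := norm_nonneg P
  have hr0 : 0 ≤ r := norm_nonneg Q
  have habs : |t| ≤ p * r := abs_real_inner_le_norm P Q
  obtain ⟨ht1, ht2⟩ := abs_le.mp habs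
  have hs0 : (0:ℝ) ≤ κ + p + r := by linarith
  have hsβ : (0:ℝ) ≤ (κ+p+r)^(q-2) := rpow_nonneg hs0 _
  have hcomm : (inner ℝ Q P : ℝ) = t := by rw [ht]; exact real_inner_comm P Q
  have hI : (inner ℝ (Atens n q κ P - Atens n q κ Q) (P - Q) : ℝ)
      = (κ+p)^(q-2)*p^2 + (κ+r)^(q-2)*r^2 - ((κ+p)^(q-2)+(κ+r)^(q-2))*t := by
    simp only [Atens, inner_sub_left, inner_sub_right, real_inner_smul_left,
      real_inner_self_eq_norm_sq, ← hp, ← hr, hcomm, ← ht]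
    ring
  have hG : ‖Ftens n q κ P - Ftens n q κ Q‖ ^ 2
      = (κ+p)^(q-2)*p^2 + (κ+r)^(q-2)*r^2
        - 2*((κ+p)^((q-2)/2)*(κ+r)^((q-2)/2))*t := by
    simp only [Ftens, norm_sub_sq_real, norm_smul, real_inner_smul_left,
      real_inner_smul_right, Real.norm_eq_abs, ← hp, ← hr, hcomm, ← ht]
    rw [abs_of_nonneg (rpow_nonneg (by linarith : (0:ℝ) ≤ κ + p) ((q-2)/2)),
      abs_of_nonneg (rpow_nonneg (by linarith : (0:ℝ) ≤ κ + r) ((q-2)/2))]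
    rw [mul_pow, mul_pow, half_sq (by linarith : (0:ℝ) ≤ κ + p),
      half_sq (by linarith : (0:ℝ) ≤ κ + r)]
    ring
  have hN : ‖P - Q‖ ^ 2 = p^2 + r^2 - 2*t := by
    simp only [norm_sub_sq_real, ← hp, ← hr, ← ht]; ring
  have hNnn : (0:ℝ) ≤ p^2 + r^2 - 2*t := by rw [← hN]; positivity
  have hV : (0:ℝ) ≤ (κ+p+r)^(q-2) * (p^2+r^2-2*t) := mul_nonneg hsβ hNnn
  -- scalar instantiations
  have Sp := scalarI (κ := κ) hβ hκ0 p r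
  have Sm := scalarI (κ := κ) hβ hκ0 p (-r)
  have Gp := scalarG (κ := κ) hβ hκ0 p r
  have Gm := scalarG (κ := κ) hβ hκ0 p (-r)
  rw [abs_of_nonneg hp0, abs_of_nonneg hr0] at Sp Gp
  rw [← hcI, ← hCI] at Sp Sm
  rw [abs_of_nonneg hp0, abs_neg, abs_of_nonneg hr0] at Sm Gm
  -- expand the G squares
  have eGp : ((κ+p)^((q-2)/2)*p - (κ+r)^((q-2)/2)*r)^2
      = (κ+p)^(q-2)*p^2 + (κ+r)^(q-2)*r^2
        - 2*((κ+p)^((q-2)/2)*(κ+r)^((q-2)/2))*(p*r) := by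
    have h1 : ((κ+p)^((q-2)/2))^2 = (κ+p)^(q-2) := half_sq (by linarith)
    have h2 : ((κ+r)^((q-2)/2))^2 = (κ+r)^(q-2) := half_sq (by linarith)
    linear_combination p^2*h1 + r^2*h2
  have eGm : ((κ+p)^((q-2)/2)*p - (κ+r)^((q-2)/2)*(-r))^2
      = (κ+p)^(q-2)*p^2 + (κ+r)^(q-2)*r^2
        + 2*((κ+p)^((q-2)/2)*(κ+r)^((q-2)/2))*(p*r) := by
    have h1 : ((κ+p)^((q-2)/2))^2 = (κ+p)^(q-2) := half_sq (by linarith)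
    have h2 : ((κ+r)^((q-2)/2))^2 = (κ+r)^(q-2) := half_sq (by linarith)
    linear_combination p^2*h1 + r^2*h2
  rw [eGp] at Gp
  rw [eGm] at Gm
  -- the four key quadratic-form bounds via the affine-in-t argument
  have K1 : cI * ((κ+p+r)^(q-2)*(p^2+r^2-2*t))
      ≤ (κ+p)^(q-2)*p^2 + (κ+r)^(q-2)*r^2 - ((κ+p)^(q-2)+(κ+r)^(q-2))*t := by
    rcases le_total ((κ+p)^(q-2)+(κ+r)^(q-2)) (2*cI*(κ+p+r)^(q-2)) with hA | hA
    · have hprod := mul_nonneg (sub_nonneg.2 hA) (by linarith : (0:ℝ) ≤ t + p*r)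
      linarith [Sm.1, hprod]
    · have hprod := mul_nonneg (sub_nonneg.2 hA) (by linarith : (0:ℝ) ≤ p*r - t)
      linarith [Sp.1, hprod]
  have K2 : (κ+p)^(q-2)*p^2 + (κ+r)^(q-2)*r^2 - ((κ+p)^(q-2)+(κ+r)^(q-2))*t
      ≤ CI * ((κ+p+r)^(q-2)*(p^2+r^2-2*t)) := by
    rcases le_total ((κ+p)^(q-2)+(κ+r)^(q-2)) (2*CI*(κ+p+r)^(q-2)) with hA | hA
    · have hprod := mul_nonneg (sub_nonneg.2 hA) (by linarith : (0:ℝ) ≤ p*r - t)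
      linarith [Sp.2, hprod]
    · have hprod := mul_nonneg (sub_nonneg.2 hA) (by linarith : (0:ℝ) ≤ t + p*r)
      linarith [Sm.2, hprod]
  have K3 : cGc (q-2) * ((κ+p+r)^(q-2)*(p^2+r^2-2*t))
      ≤ (κ+p)^(q-2)*p^2 + (κ+r)^(q-2)*r^2
        - 2*((κ+p)^((q-2)/2)*(κ+r)^((q-2)/2))*t := by
    rcases le_total (2*((κ+p)^((q-2)/2)*(κ+r)^((q-2)/2)))
        (2*cGc (q-2)*(κ+p+r)^(q-2)) with hA | hA
    · have hprod := mul_nonneg (sub_nonneg.2 hA) (by linarith : (0:ℝ) ≤ t + p*r)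
      linarith [Gm.1, hprod]
    · have hprod := mul_nonneg (sub_nonneg.2 hA) (by linarith : (0:ℝ) ≤ p*r - t)
      linarith [Gp.1, hprod]
  have K4 : (κ+p)^(q-2)*p^2 + (κ+r)^(q-2)*r^2
        - 2*((κ+p)^((q-2)/2)*(κ+r)^((q-2)/2))*t
      ≤ CGc (q-2) * ((κ+p+r)^(q-2)*(p^2+r^2-2*t)) := by
    rcases le_total (2*((κ+p)^((q-2)/2)*(κ+r)^((q-2)/2)))
        (2*CGc (q-2)*(κ+p+r)^(q-2)) with hA | hA
    · have hprod := mul_nonneg (sub_nonneg.2 hA) (by linarith : (0:ℝ) ≤ p*r - t)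
      linarith [Gp.2, hprod]
    · have hprod := mul_nonneg (sub_nonneg.2 hA) (by linarith : (0:ℝ) ≤ t + p*r)
      linarith [Gm.2, hprod]
  -- assemble
  rw [hI, hG, hN]
  have hc1a : min cI (cI/CGc (q-2)) ≤ cI := min_le_left _ _
  have hc1b : min cI (cI/CGc (q-2)) * CGc (q-2) ≤ cI := by
    have := min_le_right cI (cI/CGc (q-2))
    calc min cI (cI/CGc (q-2)) * CGc (q-2) ≤ (cI/CGc (q-2)) * CGc (q-2) :=
          mul_le_mul_of_nonneg_right this hCG0.le
      _ = cI := div_mul_cancel₀ _ hCG0.ne'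
  have hc1nn : 0 ≤ min cI (cI/CGc (q-2)) := (lt_min hcI0 (div_pos hcI0 hCG0)).le
  have hc2a : CI ≤ max CI (CI/cGc (q-2)) := le_max_left _ _
  have hc2b : CI ≤ max CI (CI/cGc (q-2)) * cGc (q-2) := by
    have h := le_max_right CI (CI/cGc (q-2))
    calc CI = (CI/cGc (q-2)) * cGc (q-2) := (div_mul_cancel₀ _ hcG0.ne').symm
      _ ≤ max CI (CI/cGc (q-2)) * cGc (q-2) := mul_le_mul_of_nonneg_right h hcG0.le
  have hc2nn : 0 ≤ max CI (CI/cGc (q-2)) := le_trans hCI0.le hc2a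
  refine ⟨?_, ?_, ?_, ?_⟩
  · -- c₁ * G ≤ I
    have s1 := mul_le_mul_of_nonneg_left K4 hc1nn
    have s2 := mul_le_mul_of_nonneg_right hc1b hV
    calc min cI (cI/CGc (q-2)) * ((κ+p)^(q-2)*p^2 + (κ+r)^(q-2)*r^2
          - 2*((κ+p)^((q-2)/2)*(κ+r)^((q-2)/2))*t)
        ≤ min cI (cI/CGc (q-2)) * (CGc (q-2) * ((κ+p+r)^(q-2)*(p^2+r^2-2*t))) := s1
      _ = min cI (cI/CGc (q-2)) * CGc (q-2) * ((κ+p+r)^(q-2)*(p^2+r^2-2*t)) := by ring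
      _ ≤ cI * ((κ+p+r)^(q-2)*(p^2+r^2-2*t)) := s2
      _ ≤ _ := K1
  · -- I ≤ c₂ * G
    have s1 := mul_le_mul_of_nonneg_left K3 hc2nn
    have s2 := mul_le_mul_of_nonneg_right hc2b hV
    calc (κ+p)^(q-2)*p^2 + (κ+r)^(q-2)*r^2 - ((κ+p)^(q-2)+(κ+r)^(q-2))*t
        ≤ CI * ((κ+p+r)^(q-2)*(p^2+r^2-2*t)) := K2
      _ ≤ max CI (CI/cGc (q-2)) * cGc (q-2) * ((κ+p+r)^(q-2)*(p^2+r^2-2*t)) := s2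
      _ = max CI (CI/cGc (q-2)) * (cGc (q-2) * ((κ+p+r)^(q-2)*(p^2+r^2-2*t))) := by ring
      _ ≤ _ := s1
  · -- c₁ * V ≤ I
    have s2 := mul_le_mul_of_nonneg_right hc1a hV
    exact s2.trans K1
  · -- I ≤ c₂ * V
    have s2 := mul_le_mul_of_nonneg_right hc2a hV
    exact K2.trans s2
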